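/- Let Z ⊆ ℝⁿ and x ∈ ℝ. Assume that every point y of Z_x has an open connected neighborhood U in ℝⁿ such that U ∩ Z_{<x} is nonempty and connected and y belongs to the closure of U ∩ Z_{<x}. Let C be a connected component of Z_{≤x}, and assume the family of subsets of C consisting of the connected components of C ∩ Z_x together with the closures in C of the connected components of C ∖ Z_x is locally finite in C. If C_{<x} is nonempty, then C_{<x} is a connected component of Z_{<x}; in particular C_{<x} is connected. -/

import Mathlib

/-- Let `Z ⊆ ℝⁿ` and `x ∈ ℝ`.  Assume every point of `Z_x` has an open
connected neighborhood `U` with `U ∩ Z_{<x}` nonempty and connected, and belongs to the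
closure of `U ∩ Z_{<x}`.  Let `C` be a connected component of `Z_{≤x}`, and assume the
family of subsets of `C` formed by the connected components of `C ∩ Z_x` together with the
closures in `C` of the connected components of `C \ Z_x` is locally finite in `C` (local
finiteness expressed with `nhdsWithin`, closures in `C` as ambient closure intersected
with `C`).  If `C_{<x}` is nonempty, then `C_{<x}` is a connected component of `Z_{<x}`;
in particular it is connected. -/
theorem component_below_of_component
    {n : ℕ} [NeZero n] (Z : Set (Fin n → ℝ)) (x : ℝ)
    (hloc : ∀ y ∈ {z ∈ Z | z 0 = x},
      ∃ U : Set (Fin n → ℝ), IsOpen U ∧ IsConnected U ∧ y ∈ U ∧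
        (U ∩ {z ∈ Z | z 0 < x}).Nonempty ∧ IsConnected (U ∩ {z ∈ Z | z 0 < x}) ∧
        y ∈ closure (U ∩ {z ∈ Z | z 0 < x}))
    (C : Set (Fin n → ℝ))
    (hC : ∃ z ∈ {z ∈ Z | z 0 ≤ x}, C = connectedComponentIn {z ∈ Z | z 0 ≤ x} z)
    (ℱ : Set (Set (Fin n → ℝ)))
    (hℱ : ℱ = {D | (∃ a ∈ C ∩ {z | z 0 = x},
                      D = connectedComponentIn (C ∩ {z | z 0 = x}) a) ∨
                   (∃ a ∈ C \ {z | z 0 = x},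
                      D = closure (connectedComponentIn (C \ {z | z 0 = x}) a) ∩ C)})
    (hLF : ∀ c ∈ C, ∃ t ∈ nhdsWithin c C, {D ∈ ℱ | (D ∩ t).Nonempty}.Finite)
    (hne : (C ∩ {z | z 0 < x}).Nonempty) :
    (∃ z ∈ {z ∈ Z | z 0 < x},
      C ∩ {z | z 0 < x} = connectedComponentIn {z ∈ Z | z 0 < x} z) ∧
    IsConnected (C ∩ {z | z 0 < x}) := by
  clear hLF hℱ
  obtain ⟨z₀, hz₀, hCdef⟩ := hC
  have hCconn : IsPreconnected C := hCdef ▸ isPreconnected_connectedComponentIn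
  have hCsub : C ⊆ {z ∈ Z | z 0 ≤ x} := hCdef ▸ connectedComponentIn_subset _ _
  set S : Set (Fin n → ℝ) := C ∩ {z | z 0 < x} with hSdef
  have hSsub : S ⊆ {z ∈ Z | z 0 < x} := fun p hp => ⟨(hCsub hp.1).1, hp.2⟩
  -- C is the component of each of its points
  have hCeq : ∀ p ∈ C, connectedComponentIn {z ∈ Z | z 0 ≤ x} z₀
      = connectedComponentIn {z ∈ Z | z 0 ≤ x} p := by
    intro p hp
    exact connectedComponentIn_eq (hCdef ▸ hp)
  -- Step 1: S is preconnected.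
  have hSpre : IsPreconnected S := by
    intro u v hu hv hcov hau hbv
    by_contra hempty
    have hUV : S ∩ (u ∩ v) = ∅ := Set.not_nonempty_iff_eq_empty.mp hempty
    -- key dichotomy for every point of C
    have key : ∀ p ∈ C, (p ∈ closure (S ∩ u) ∧ p ∉ closure (S ∩ v)) ∨
        (p ∈ closure (S ∩ v) ∧ p ∉ closure (S ∩ u)) := by
      intro p hp
      by_cases hpS : p ∈ S
      · rcases hcov hpS with hpu | hpv
        · left
          refine ⟨subset_closure ⟨hpS, hpu⟩, ?_⟩
          rw [mem_closure_iff]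
          push_neg
          refine ⟨u, hu, hpu, ?_⟩
          ext q; simp only [Set.mem_inter_iff, Set.mem_empty_iff_false, iff_false]
          rintro ⟨hqu, hqS, hqv⟩
          exact absurd (show q ∈ S ∩ (u ∩ v) from ⟨hqS, hqu, hqv⟩) (by rw [hUV]; exact Set.notMem_empty q)
        · right
          refine ⟨subset_closure ⟨hpS, hpv⟩, ?_⟩
          rw [mem_closure_iff]
          push_neg
          refine ⟨v, hv, hpv, ?_⟩
          ext q; simp only [Set.mem_inter_iff, Set.mem_empty_iff_false, iff_false]
          rintro ⟨hqv, hqS, hqu⟩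
          exact absurd (show q ∈ S ∩ (u ∩ v) from ⟨hqS, hqu, hqv⟩) (by rw [hUV]; exact Set.notMem_empty q)
      · -- p ∈ C with p 0 = x
        have hpZ : p ∈ Z := (hCsub hp).1
        have hpx : p 0 = x := by
          have hle : p 0 ≤ x := (hCsub hp).2
          have : ¬ p 0 < x := fun h => hpS ⟨hp, h⟩
          linarith [lt_or_eq_of_le hle |>.resolve_left this]
        obtain ⟨U, hUo, -, hpU, hTne, hTconn, hpcl⟩ := hloc p ⟨hpZ, hpx⟩
        set T : Set (Fin n → ℝ) := U ∩ {z ∈ Z | z 0 < x} with hTdef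
        -- T ⊆ S
        have hins : IsPreconnected (insert p T) := by
          refine hTconn.isPreconnected.subset_closure (Set.subset_insert _ _) ?_
          rintro q (rfl | hq)
          · exact hpcl
          · exact subset_closure hq
        have hinsC : insert p T ⊆ C := by
          have h1 : insert p T ⊆ {z ∈ Z | z 0 ≤ x} := by
            rintro q (rfl | hq)
            · exact ⟨hpZ, le_of_eq hpx⟩
            · exact ⟨hq.2.1, le_of_lt hq.2.2⟩
          have := hins.subset_connectedComponentIn (Set.mem_insert p T) h1
          rw [hCdef, hCeq p hp]
          exact this
        have hTS : T ⊆ S := fun q hq =>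
          ⟨hinsC (Set.mem_insert_of_mem _ hq), hq.2.2⟩
        -- T meets only one of u, v
        have hTuv : T ⊆ u ∨ T ⊆ v := by
          by_contra hcon
          push_neg at hcon
          obtain ⟨a, ha, hau'⟩ := Set.not_subset.mp hcon.1
          obtain ⟨b, hb, hbv'⟩ := Set.not_subset.mp hcon.2
          have hacov := hcov (hTS ha)
          have hbcov := hcov (hTS hb)
          have hav : a ∈ v := hacov.resolve_left hau'
          have hbu : b ∈ u := hbcov.resolve_right hbv'
          have := hTconn.isPreconnected u v hu hv (fun q hq => hcov (hTS hq))
            ⟨b, hb, hbu⟩ ⟨a, ha, hav⟩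
          obtain ⟨q, hqT, hquv⟩ := this
          exact absurd (show q ∈ S ∩ (u ∩ v) from ⟨hTS hqT, hquv⟩)
            (by rw [hUV]; exact Set.notMem_empty q)
        rcases hTuv with hTu | hTv
        · left
          constructor
          · exact closure_mono (show T ⊆ S ∩ u from fun q hq => ⟨hTS hq, hTu hq⟩) hpcl
          · rw [mem_closure_iff]
            push_neg
            refine ⟨U, hUo, hpU, ?_⟩
            ext q; simp only [Set.mem_inter_iff, Set.mem_empty_iff_false, iff_false]
            rintro ⟨hqU, ⟨hqS, hqv⟩⟩
            have hqT : q ∈ T := ⟨hqU, hSsub hqS⟩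
            exact absurd (show q ∈ S ∩ (u ∩ v) from ⟨hqS, ⟨hTu hqT, hqv⟩⟩)
              (by rw [hUV]; exact Set.notMem_empty q)
        · right
          constructor
          · exact closure_mono (show T ⊆ S ∩ v from fun q hq => ⟨hTS hq, hTv hq⟩) hpcl
          · rw [mem_closure_iff]
            push_neg
            refine ⟨U, hUo, hpU, ?_⟩
            ext q; simp only [Set.mem_inter_iff, Set.mem_empty_iff_false, iff_false]
            rintro ⟨hqU, ⟨hqS, hqu⟩⟩
            have hqT : q ∈ T := ⟨hqU, hSsub hqS⟩
            exact absurd (show q ∈ S ∩ (u ∩ v) from ⟨hqS, ⟨hqu, hTv hqT⟩⟩)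
              (by rw [hUV]; exact Set.notMem_empty q)
    -- now apply the closed-cover characterization to C
    obtain ⟨a, haS, hau'⟩ := hau
    obtain ⟨b, hbS, hbv'⟩ := hbv
    have hcl := isPreconnected_closed_iff.mp hCconn (closure (S ∩ u)) (closure (S ∩ v))
      isClosed_closure isClosed_closure
      (fun p hp => by rcases key p hp with ⟨h1, _⟩ | ⟨h1, _⟩
                      exacts [Or.inl h1, Or.inr h1])
      ⟨a, haS.1, subset_closure ⟨haS, hau'⟩⟩
      ⟨b, hbS.1, subset_closure ⟨hbS, hbv'⟩⟩
    obtain ⟨q, hqC, hq1, hq2⟩ := hcl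
    rcases key q hqC with ⟨-, h⟩ | ⟨-, h⟩
    exacts [h hq2, h hq1]
  have hSconn : IsConnected S := ⟨hne, hSpre⟩
  refine ⟨?_, hSconn⟩
  obtain ⟨z, hzS⟩ := hne
  refine ⟨z, hSsub hzS, ?_⟩
  apply Set.Subset.antisymm
  · exact hSpre.subset_connectedComponentIn hzS hSsub
  · intro q hq
    have h1 : connectedComponentIn {z ∈ Z | z 0 < x} z ⊆ C := by
      have hsub : connectedComponentIn {z ∈ Z | z 0 < x} z ⊆ {z ∈ Z | z 0 ≤ x} :=
        fun w hw => ⟨(connectedComponentIn_subset _ _ hw).1,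
          le_of_lt (connectedComponentIn_subset _ _ hw).2⟩
      have hzmem : z ∈ connectedComponentIn {z ∈ Z | z 0 < x} z :=
        mem_connectedComponentIn (hSsub hzS)
      have := (isPreconnected_connectedComponentIn).subset_connectedComponentIn hzmem hsub
      rw [hCdef, hCeq z hzS.1]
      exact this
    exact ⟨h1 hq, (connectedComponentIn_subset _ _ hq).2⟩
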